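/- Let E be a category with finite limits, i : D ⥤ E a fully faithful functor admitting a left adjoint L, F = L ⋙ i the associated idempotent endofunctor with unit η, and assume F preserves finite limits. Then F-equivalences are stable under base change: if f : A ⟶ B is an F-equivalence, g : B' ⟶ B is any morphism, and f' : A ×_B B' ⟶ B' is the pullback of f along g, then f' is an F-equivalence. -/
import Mathlib

open CategoryTheory Limits

/-- For a reflective localization `L ⊣ i` with `F = L ⋙ i` preserving finite
limits, `F`-equivalences are stable under base change: any pullback of an `F`-equivalence along
an arbitrary morphism is again an `F`-equivalence. -/
theorem goodwillie_stmt_1 {D E : Type*} [Category D] [Category E] [HasFiniteLimits E]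
    (L : E ⥤ D) (i : D ⥤ E) [i.Full] [i.Faithful] (adj : L ⊣ i)
    [PreservesFiniteLimits (L ⋙ i)]
    {A B B' P : E} (f : A ⟶ B) (g : B' ⟶ B) (p : P ⟶ A) (f' : P ⟶ B')
    (sq : IsPullback p f' f g)
    (hf : IsIso ((L ⋙ i).map f)) :
    IsIso ((L ⋙ i).map f') := by
  set F := L ⋙ i
  have sq' : IsPullback (F.map p) (F.map f') (F.map f) (F.map g) := sq.map F
  have sq'' : IsPullback (F.map g ≫ inv (F.map f)) (𝟙 (F.obj B')) (F.map f) (F.map g) :=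
    IsPullback.of_vert_isIso ⟨by simp⟩
  have h := sq'.isoIsPullback_hom_snd _ _ sq''
  rw [Category.comp_id] at h
  rw [← h]
  infer_instance
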